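/- Let f be a transcendental entire function, let R > 0 be such that M(r, f) > r for all r ≥ R, and suppose that A_R(f) is a spider's web. Let (H_n)_{n≥0} and (L_n)_{n≥0} be the sequences of fundamental holes and loops for A_R(f). If L ∈ ℤ and G is a connected component of the complement of A_R^L(f), then for all sufficiently large n ∈ ℕ (in particular with n + L ≥ 0), f^n(G) = H_{n+L} and f^n(∂G) = L_{n+L}. -/

import Mathlib

open Set Metric Topology Function Bornology

/-- The maximum modulus `M(r, f)` of `f` on the circle `|z| = r`. -/
noncomputable def maxMod (f : ℂ → ℂ) (r : ℝ) : ℝ :=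
  sSup ((fun z => ‖f z‖) '' Metric.sphere (0 : ℂ) r)

/-- `f` is a transcendental entire function: holomorphic on all of `ℂ` and not a polynomial. -/
def TranscEntire (f : ℂ → ℂ) : Prop :=
  Differentiable ℂ f ∧ ¬ ∃ p : Polynomial ℂ, ∀ z, f z = p.eval z

/-- The fast escaping set `A(f)` (with parameter `R`). -/
def fastEscaping (f : ℂ → ℂ) (R : ℝ) : Set ℂ :=
  {z | ∃ L : ℕ, ∀ n : ℕ, (maxMod f)^[n] R ≤ ‖f^[n + L] z‖}

/-- The `L`-th level `A_R^L(f)` of the fast escaping set. -/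
def levelSet (f : ℂ → ℂ) (R : ℝ) (L : ℤ) : Set ℂ :=
  {z | ∀ n : ℕ, 0 ≤ (n : ℤ) + L →
    (maxMod f)^[((n : ℤ) + L).toNat] R ≤ ‖f^[n] z‖}

/-- `E ⊆ ℂ` is an (infinite) spider's web. -/
def SpidersWeb (E : Set ℂ) : Prop :=
  IsConnected E ∧ ∃ G : ℕ → Set ℂ,
    (∀ n, IsOpen (G n) ∧ IsConnected (G n) ∧ Bornology.IsBounded (G n) ∧
      SimplyConnectedSpace (G n) ∧ G n ⊆ G (n + 1) ∧ frontier (G n) ⊆ E) ∧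
    (⋃ n, G n) = Set.univ

/-- `K` is a connected component of the set `S`. -/
def IsCompOf {X : Type*} [TopologicalSpace X] (K S : Set X) : Prop :=
  ∃ z ∈ S, K = connectedComponentIn S z

/-- The `n`-th fundamental hole for `A_R(f)`: the component of the complement of
`A_R^n(f)` containing `0`. -/
noncomputable def fundHole (f : ℂ → ℂ) (R : ℝ) (n : ℤ) : Set ℂ :=
  connectedComponentIn (levelSet f R n)ᶜ 0

/-- The `n`-th fundamental loop for `A_R(f)`. -/
noncomputable def fundLoop (f : ℂ → ℂ) (R : ℝ) (n : ℤ) : Set ℂ :=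
  frontier (fundHole f R n)

namespace Stmt19

variable {f : ℂ → ℂ} {R : ℝ}

lemma bddAbove_aux (hd : Differentiable ℂ f) (r : ℝ) :
    BddAbove ((fun z => ‖f z‖) '' Metric.sphere (0 : ℂ) r) :=
  ((isCompact_sphere 0 r).image (continuous_norm.comp hd.continuous)).bddAbove

lemma le_maxMod (hd : Differentiable ℂ f) {r : ℝ} {z : ℂ} (hz : ‖z‖ = r) :
    ‖f z‖ ≤ maxMod f r :=
  le_csSup (bddAbove_aux hd r) ⟨z, by simpa [mem_sphere_iff_norm] using hz, rfl⟩

lemma nonconst (hR : 0 < R) (hM : ∀ r ≥ R, r < maxMod f r) : ¬ ∃ w, ∀ z, f z = w := by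
  rintro ⟨w, hw⟩
  set r := max R (‖w‖ + 1) with hrdef
  have hr0 : (0:ℝ) ≤ r := le_trans hR.le (le_max_left _ _)
  have himg : ((fun z => ‖f z‖) '' Metric.sphere (0 : ℂ) r) = {‖w‖} := by
    apply Subset.antisymm
    · rintro x ⟨z, _, rfl⟩; simp [hw]
    · rintro x hx
      obtain ⟨z, hz⟩ : (Metric.sphere (0:ℂ) r).Nonempty := NormedSpace.sphere_nonempty.mpr hr0
      exact ⟨z, hz, by simp [hw, mem_singleton_iff.mp hx]⟩
  have h1 := hM r (le_max_left _ _)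
  rw [maxMod, himg, csSup_singleton] at h1
  have h2 : ‖w‖ + 1 ≤ r := le_max_right _ _
  linarith

lemma abs_lt_maxMod (hd : Differentiable ℂ f) (hnc : ¬ ∃ w, ∀ z, f z = w)
    {r : ℝ} (hr : 0 < r) {z : ℂ} (hz : ‖z‖ < r) :
    ‖f z‖ < maxMod f r := by
  obtain ⟨c, hcK, hc⟩ := (isCompact_closedBall (0:ℂ) r).exists_isMaxOn
    ⟨0, by simp [hr.le]⟩ ((continuous_norm.comp hd.continuous).continuousOn)
  have key : ∀ x : ℂ, IsMaxOn (fun z => ‖f z‖) (Metric.closedBall 0 r) x →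
      ‖x‖ < r → False := by
    intro x hxmax hxr
    have hxball : x ∈ Metric.ball (0:ℂ) r := by simpa [mem_ball_zero_iff] using hxr
    have hmaxball : IsMaxOn (norm ∘ f) (Metric.ball (0:ℂ) r) x := fun y hy =>
      hxmax (Metric.ball_subset_closedBall hy)
    have heq := Complex.eqOn_of_isPreconnected_of_isMaxOn_norm
      (convex_ball (0:ℂ) r).isPreconnected isOpen_ball hd.differentiableOn hxball hmaxball
    apply hnc
    refine ⟨f x, fun y => ?_⟩
    have han : AnalyticOnNhd ℂ f univ := hd.differentiableOn.analyticOnNhd isOpen_univ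
    have hev : f =ᶠ[𝓝 x] (fun _ => f x) :=
      Filter.eventuallyEq_of_mem (isOpen_ball.mem_nhds hxball) heq
    exact han.eqOn_of_preconnected_of_eventuallyEq analyticOnNhd_const isPreconnected_univ
      (mem_univ x) hev (mem_univ y)
  have hcr : ‖c‖ = r := by
    have hle : ‖c‖ ≤ r := by simpa [mem_closedBall_zero_iff] using hcK
    rcases lt_or_eq_of_le hle with h | h
    · exact (key c hc h).elim
    · exact h
  have hzc : ‖f z‖ < ‖f c‖ := by
    rcases lt_or_ge (‖f z‖) (‖f c‖) with h | h
    · exact h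
    · exfalso
      apply key z _ hz
      intro y hy
      exact le_trans (hc hy) h
  exact lt_of_lt_of_le hzc (le_maxMod hd hcr)


section Iter
variable (hR : 0 < R) (hM : ∀ r ≥ R, r < maxMod f r)
include hR hM

lemma R_le_iterM : ∀ k : ℕ, R ≤ (maxMod f)^[k] R := by
  intro k
  induction k with
  | zero => simp
  | succ k ih =>
    rw [Function.iterate_succ_apply']
    exact le_trans ih (hM _ ih).le

lemma iterM_pos (k : ℕ) : 0 < (maxMod f)^[k] R := lt_of_lt_of_le hR (R_le_iterM hR hM k)

lemma iterM_mono : ∀ {j k : ℕ}, j ≤ k → (maxMod f)^[j] R ≤ (maxMod f)^[k] R := by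
  intro j k hjk
  induction k with
  | zero => simp_all
  | succ k ih =>
    rcases Nat.lt_or_ge j (k+1) with h | h
    · refine le_trans (ih (by omega)) ?_
      rw [Function.iterate_succ_apply']
      exact (hM _ (R_le_iterM hR hM k)).le
    · have : j = k + 1 := by omega
      simp [this]

end Iter

section Level

variable (hd : Differentiable ℂ f) (hnc : ¬ ∃ w, ∀ z, f z = w)
  (hR : 0 < R) (hM : ∀ r ≥ R, r < maxMod f r)

include hd hnc hR hM in
lemma dip_step {k : ℕ} {w : ℂ} (hw : ‖w‖ < (maxMod f)^[k] R) :
    ‖f w‖ < (maxMod f)^[k+1] R := by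
  rw [Function.iterate_succ_apply']
  exact abs_lt_maxMod hd hnc (iterM_pos hR hM k) hw

include hd hnc hR hM in
lemma not_mem_levelSet_step {m : ℤ} {z : ℂ} (hz : z ∉ levelSet f R m) :
    f z ∉ levelSet f R (m+1) := by
  intro hfz
  apply hz
  intro n hn
  cases n with
  | zero =>
    by_contra hlt
    push_neg at hlt
    have h1 : ‖f z‖ < (maxMod f)^[((0:ℤ)+m).toNat + 1] R :=
      dip_step hd hnc hR hM (by simpa using hlt)
    have h2 := hfz 0 (by omega)
    have h3 : ((0:ℕ):ℤ) + (m+1) = ((0:ℤ)+m) + 1 := by omega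
    have h4 : ((0:ℤ) + m + 1).toNat = ((0:ℤ)+m).toNat + 1 := by omega
    rw [h3, h4] at h2
    simp only [Function.iterate_zero_apply] at h1 h2
    exact absurd h2 (not_le.mpr h1)
  | succ n =>
    have h2 := hfz n (by push_cast; omega)
    have h3 : ((n:ℕ):ℤ) + (m+1) = (((n:ℕ)+1 : ℕ) : ℤ) + m := by push_cast; omega
    rw [h3] at h2
    rwa [Function.iterate_succ_apply]

lemma mem_levelSet_step {m : ℤ} {z : ℂ} (hz : z ∈ levelSet f R m) :
    f z ∈ levelSet f R (m+1) := by
  intro n hn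
  have h2 := hz (n+1) (by push_cast; omega)
  have h3 : (((n:ℕ)+1 : ℕ) : ℤ) + m = ((n:ℕ):ℤ) + (m+1) := by push_cast; omega
  rw [h3] at h2
  rwa [Function.iterate_succ_apply] at h2

lemma mem_levelSet_iter {m : ℤ} {z : ℂ} (hz : z ∈ levelSet f R m) (n : ℕ) :
    f^[n] z ∈ levelSet f R (m+n) := by
  induction n with
  | zero => simpa using hz
  | succ n ih =>
    have := mem_levelSet_step (f := f) (R := R) ih
    rw [Function.iterate_succ_apply']
    convert this using 2
    push_cast; ring

include hd hnc hR hM in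
lemma not_mem_levelSet_iter {m : ℤ} {z : ℂ} (hz : z ∉ levelSet f R m) (n : ℕ) :
    f^[n] z ∉ levelSet f R (m+n) := by
  induction n with
  | zero => simpa using hz
  | succ n ih =>
    have := not_mem_levelSet_step hd hnc hR hM (f := f) (R := R) ih
    rw [Function.iterate_succ_apply']
    convert this using 3
    push_cast; ring

include hR hM in
lemma levelSet_antitone {m₁ m₂ : ℤ} (h : m₁ ≤ m₂) :
    levelSet f R m₂ ⊆ levelSet f R m₁ := by
  refine Int.le_induction (motive := fun m _ => levelSet f R m ⊆ levelSet f R m₁)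
    subset_rfl (fun k hk ih => ?_) m₂ h
  refine subset_trans ?_ ih
  intro z hz n hn
  have h2 := hz n (by omega)
  refine le_trans ?_ h2
  exact iterM_mono hR hM (by omega)

lemma abs_ge_of_mem_levelSet {m : ℤ} (hm : 0 ≤ m) {z : ℂ} (hz : z ∈ levelSet f R m) :
    (maxMod f)^[m.toNat] R ≤ ‖z‖ := by
  have := hz 0 (by omega)
  simpa using this

include hd in
lemma levelSet_isClosed (m : ℤ) : IsClosed (levelSet f R m) := by
  have : levelSet f R m = ⋂ n : ℕ, {z : ℂ | 0 ≤ (n : ℤ) + m →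
      (maxMod f)^[((n : ℤ) + m).toNat] R ≤ ‖f^[n] z‖} := by
    ext z; simp only [levelSet, Set.mem_iInter, Set.mem_setOf_eq]
  rw [this]
  refine isClosed_iInter fun n => ?_
  by_cases h : 0 ≤ (n : ℤ) + m
  · have : {z : ℂ | 0 ≤ (n : ℤ) + m →
        (maxMod f)^[((n : ℤ) + m).toNat] R ≤ ‖f^[n] z‖} =
        {z : ℂ | (maxMod f)^[((n : ℤ) + m).toNat] R ≤ ‖f^[n] z‖} := by
      ext z; simp [h]
    rw [this]
    exact isClosed_le continuous_const
      (continuous_norm.comp (hd.continuous.iterate n))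
  · have : {z : ℂ | 0 ≤ (n : ℤ) + m →
        (maxMod f)^[((n : ℤ) + m).toNat] R ≤ ‖f^[n] z‖} = univ := by
      ext z; simp [h]
    rw [this]; exact isClosed_univ

end Level


section Topo

lemma subset_of_preconnected_aux {G V : Set ℂ} (hGc : IsPreconnected G) (hV : IsOpen V)
    (hdisj : G ∩ frontier V = ∅) (hmeet : (G ∩ V).Nonempty) : G ⊆ V := by
  have hfr : ∀ z ∈ G, z ∉ frontier V := by
    intro z hz hfz
    exact absurd (Set.eq_empty_iff_forall_notMem.mp hdisj z ⟨hz, hfz⟩) (fun h => h)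
  have hcover : G ⊆ V ∪ (closure V)ᶜ := by
    intro z hz
    by_cases h : z ∈ closure V
    · left
      have : z ∈ interior V := by
        by_contra hint
        exact hfr z hz ⟨h, hint⟩
      rwa [hV.interior_eq] at this
    · right; exact h
  intro z hz
  by_contra hzV
  have hz2 : z ∈ (closure V)ᶜ := by
    rcases hcover hz with h | h
    · exact absurd h hzV
    · exact h
  obtain ⟨x, hxG, hxV, hxc⟩ := hGc V (closure V)ᶜ hV isClosed_closure.isOpen_compl hcover
    hmeet ⟨z, hz, hz2⟩
  exact hxc (subset_closure hxV)

lemma frontier_connectedComponentIn_subset {U : Set ℂ} (hU : IsOpen U) (x : ℂ) :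
    frontier (connectedComponentIn U x) ⊆ Uᶜ := by
  intro y hy
  by_contra hyU
  rw [Set.notMem_compl_iff] at hyU
  have hyopen : IsOpen (connectedComponentIn U y) := hU.connectedComponentIn
  have hycl : y ∈ closure (connectedComponentIn U x) := hy.1
  have hne : (connectedComponentIn U y ∩ connectedComponentIn U x).Nonempty := by
    rw [_root_.mem_closure_iff] at hycl
    exact hycl _ hyopen (mem_connectedComponentIn hyU)
  obtain ⟨g, hg1, hg2⟩ := hne
  have h1 : connectedComponentIn U y = connectedComponentIn U g := connectedComponentIn_eq hg1
  have h2 : connectedComponentIn U x = connectedComponentIn U g := connectedComponentIn_eq hg2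
  have hyG : y ∈ connectedComponentIn U x := by
    rw [h2, ← h1]
    exact mem_connectedComponentIn hyU
  have : y ∈ interior (connectedComponentIn U x) := by
    rwa [(hU.connectedComponentIn).interior_eq]
  exact hy.2 this

lemma frontier_image_subset {g : ℂ → ℂ} (hg : Continuous g) {U : Set ℂ}
    (hUb : Bornology.IsBounded U) (hopen : IsOpen (g '' U)) :
    frontier (g '' U) ⊆ g '' (frontier U) := by
  intro y hy
  have h1 : y ∈ closure (g '' U) := hy.1
  have hKc : IsCompact (closure U) := hUb.isCompact_closure
  have h2 : closure (g '' U) ⊆ g '' closure U :=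
    closure_minimal (Set.image_mono subset_closure) (hKc.image hg).isClosed
  obtain ⟨x, hx, rfl⟩ := h2 h1
  by_cases hxU : x ∈ U
  · exfalso
    apply hy.2
    rw [hopen.interior_eq]
    exact ⟨x, hxU, rfl⟩
  · exact ⟨x, ⟨hx, fun hint => hxU (interior_subset hint)⟩, rfl⟩

end Topo

section Dyn

variable {f : ℂ → ℂ}

lemma dense_iterate (hd : Differentiable ℂ f) (hnc : ¬ ∃ w, ∀ z, f z = w) :
    ∀ (k : ℕ) (U : Set ℂ), IsOpen U → U.Nonempty → ∃ u, f^[k] u ∈ U := by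
  intro k
  induction k with
  | zero => exact fun U _ hne => hne.imp (fun u hu => by simpa using hu)
  | succ n ih =>
    intro U hUo hUne
    have hpre : (f ⁻¹' U).Nonempty := by
      by_contra hemp
      rw [Set.not_nonempty_iff_eq_empty] at hemp
      obtain ⟨w, hw⟩ := hUne
      obtain ⟨ε, hε, hball⟩ := Metric.isOpen_iff.mp hUo w hw
      have hfar : ∀ z : ℂ, ε ≤ ‖f z - w‖ := by
        intro z
        by_contra hlt
        push_neg at hlt
        have : f z ∈ Metric.ball w ε := by
          rw [Metric.mem_ball, Complex.dist_eq]
          exact hlt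
        have : z ∈ f ⁻¹' U := hball this
        rw [hemp] at this
        exact this
      have hne0 : ∀ z : ℂ, f z - w ≠ 0 := by
        intro z h
        have := hfar z
        rw [h] at this
        simp at this
        linarith
      set g := fun z => (f z - w)⁻¹ with hgdef
      have hgd : Differentiable ℂ g := (hd.sub_const w).inv hne0
      have hb : Bornology.IsBounded (Set.range g) := by
        rw [Metric.isBounded_iff_subset_closedBall 0]
        refine ⟨ε⁻¹, ?_⟩
        rintro x ⟨z, rfl⟩
        rw [Metric.mem_closedBall, dist_zero_right]
        have : ‖g z‖ = (‖f z - w‖)⁻¹ := by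
          simp [hgdef]
        rw [this]
        exact inv_anti₀ hε (hfar z)
      have hconst := hgd.apply_eq_apply_of_bounded hb
      apply hnc
      refine ⟨w + (g 0)⁻¹, fun z => ?_⟩
      have h0 : g z = g 0 := hconst z 0
      have : f z - w = (g 0)⁻¹ := by
        rw [← h0, hgdef]
        simp [inv_inv]
      linear_combination this
    obtain ⟨u, hu⟩ := ih (f ⁻¹' U) (hUo.preimage hd.continuous) hpre
    exact ⟨u, by rw [Function.iterate_succ_apply']; exact hu⟩

lemma isOpen_image_iterate (hd : Differentiable ℂ f) (hnc : ¬ ∃ w, ∀ z, f z = w)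
    (n : ℕ) {s : Set ℂ} (hs : IsOpen s) : IsOpen (f^[n] '' s) := by
  have hopen1 : ∀ t : Set ℂ, IsOpen t → IsOpen (f '' t) := by
    have han : AnalyticOnNhd ℂ f univ := hd.differentiableOn.analyticOnNhd isOpen_univ
    rcases han.is_constant_or_isOpen isPreconnected_univ with ⟨w, hw⟩ | h
    · exact absurd ⟨w, fun z => hw z (mem_univ z)⟩ hnc
    · exact fun t ht => h t (subset_univ t) ht
  induction n with
  | zero => simpa using hs
  | succ n ih =>
    rw [Function.iterate_succ', Set.image_comp]
    exact hopen1 _ ih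

end Dyn

end Stmt19


theorem stmt_19 (f : ℂ → ℂ) (R : ℝ) (hf : TranscEntire f) (hR : 0 < R)
    (hM : ∀ r ≥ R, r < maxMod f r) (hweb : SpidersWeb (levelSet f R 0))
    (L : ℤ) (G : Set ℂ) (hG : IsCompOf G (levelSet f R L)ᶜ) :
    ∃ N : ℕ, ∀ n : ℕ, N ≤ n → 0 ≤ (n : ℤ) + L ∧
      f^[n] '' G = fundHole f R ((n : ℤ) + L) ∧
      f^[n] '' frontier G = fundLoop f R ((n : ℤ) + L) := by
  obtain ⟨hd, -⟩ := hf
  have hnc : ¬ ∃ w, ∀ z, f z = w := Stmt19.nonconst hR hM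
  obtain ⟨z1, hz1U, hGeq⟩ := hG
  have hUopen : IsOpen (levelSet f R L)ᶜ := (Stmt19.levelSet_isClosed hd L).isOpen_compl
  have hGopen : IsOpen G := by rw [hGeq]; exact hUopen.connectedComponentIn
  have hGconn : IsPreconnected G := by rw [hGeq]; exact isPreconnected_connectedComponentIn
  have hz1G : z1 ∈ G := by rw [hGeq]; exact mem_connectedComponentIn hz1U
  have hGsub : G ⊆ (levelSet f R L)ᶜ := by
    rw [hGeq]; exact connectedComponentIn_subset _ _
  have hfrG : frontier G ⊆ levelSet f R L := by
    rw [hGeq]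
    have := Stmt19.frontier_connectedComponentIn_subset hUopen z1
    simpa using this
  -- the dip time of z1
  have hz1not : z1 ∉ levelSet f R L := hz1U
  have hex : ∃ m0 : ℕ, 0 ≤ (m0:ℤ) + L ∧
      ‖f^[m0] z1‖ < (maxMod f)^[((m0:ℤ)+L).toNat] R := by
    have h := hz1not
    simp only [levelSet, Set.mem_setOf_eq, not_forall] at h
    obtain ⟨m0, hm⟩ := h
    push_neg at hm
    exact ⟨m0, hm.1, hm.2⟩
  obtain ⟨m0, hm0L, hm0dip⟩ := hex
  -- dip propagation
  have hdip : ∀ n : ℕ, m0 ≤ n →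
      ‖f^[n] z1‖ < (maxMod f)^[((n:ℤ)+L).toNat] R := by
    intro n hn
    induction n, hn using Nat.le_induction with
    | base => exact hm0dip
    | succ n hn ih =>
      have step := Stmt19.dip_step hd hnc hR hM (k := ((n:ℤ)+L).toNat) (w := f^[n] z1) ih
      rw [Function.iterate_succ_apply']
      have hge : (m0:ℤ) ≤ (n:ℤ) := by exact_mod_cast hn
      have hidx : (((n+1:ℕ):ℤ)+L).toNat = ((n:ℤ)+L).toNat + 1 := by push_cast; omega
      rw [hidx]
      exact step
  -- G is bounded
  obtain ⟨-, Gk, hGk, hGkUnion⟩ := hweb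
  have hGbounded : Bornology.IsBounded G := by
    rcases le_or_gt L 0 with hL | hL
    · have hz1k : ∃ k, z1 ∈ Gk k := by
        have : z1 ∈ ⋃ k, Gk k := by rw [hGkUnion]; trivial
        simpa using this
      obtain ⟨k, hk⟩ := hz1k
      have hfr : frontier (Gk k) ⊆ levelSet f R L :=
        subset_trans (hGk k).2.2.2.2.2 (Stmt19.levelSet_antitone hR hM hL)
      have hsub : G ⊆ Gk k := by
        apply Stmt19.subset_of_preconnected_aux hGconn (hGk k).1
        · apply Set.eq_empty_iff_forall_notMem.mpr
          rintro z ⟨hzG, hzfr⟩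
          exact (hGsub hzG) (hfr hzfr)
        · exact ⟨z1, hz1G, hk⟩
      exact ((hGk k).2.2.1).subset hsub
    · set L' := L.toNat with hL'
      have hLL' : (L' : ℤ) = L := Int.toNat_of_nonneg hL.le
      obtain ⟨u, hu⟩ := Stmt19.dense_iterate hd hnc L' G hGopen ⟨z1, hz1G⟩
      have huk : ∃ k, u ∈ Gk k := by
        have : u ∈ ⋃ k, Gk k := by rw [hGkUnion]; trivial
        simpa using this
      obtain ⟨k, hk⟩ := huk
      set V := f^[L'] '' (Gk k) with hV
      have hVopen : IsOpen V := Stmt19.isOpen_image_iterate hd hnc L' (hGk k).1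
      have hVbounded : Bornology.IsBounded V := by
        have hsub : V ⊆ f^[L'] '' closure (Gk k) := Set.image_mono subset_closure
        exact ((((hGk k).2.2.1.isCompact_closure).image
          (hd.continuous.iterate L')).isBounded).subset hsub
      have hfrV : frontier V ⊆ levelSet f R L := by
        refine subset_trans (Stmt19.frontier_image_subset (hd.continuous.iterate L')
          (hGk k).2.2.1 hVopen) ?_
        rintro y ⟨x, hx, rfl⟩
        have hx0 : x ∈ levelSet f R 0 := (hGk k).2.2.2.2.2 hx
        have hin := Stmt19.mem_levelSet_iter (f := f) (R := R) hx0 L'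
        rwa [zero_add, hLL'] at hin
      have hsub : G ⊆ V := by
        apply Stmt19.subset_of_preconnected_aux hGconn hVopen
        · apply Set.eq_empty_iff_forall_notMem.mpr
          rintro z ⟨hzG, hzfr⟩
          exact (hGsub hzG) (hfrV hzfr)
        · exact ⟨f^[L'] u, hu, ⟨u, hk, rfl⟩⟩
      exact hVbounded.subset hsub
  -- main conclusion
  refine ⟨m0, fun n hn => ?_⟩
  have hge : (m0:ℤ) ≤ (n:ℤ) := by exact_mod_cast hn
  have hnL : 0 ≤ (n:ℤ) + L := by omega
  refine ⟨hnL, ?_⟩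
  set m : ℤ := (n:ℤ) + L with hm
  set W := f^[n] '' G with hW
  set H := fundHole f R m with hH
  have hWopen : IsOpen W := Stmt19.isOpen_image_iterate hd hnc n hGopen
  have hWconn : IsPreconnected W := hGconn.image _ (hd.continuous.iterate n).continuousOn
  have hmclosed : IsClosed (levelSet f R m) := Stmt19.levelSet_isClosed hd m
  have hHopen : IsOpen H := by
    rw [hH, fundHole]; exact hmclosed.isOpen_compl.connectedComponentIn
  have hHconn : IsPreconnected H := by
    rw [hH, fundHole]; exact isPreconnected_connectedComponentIn
  have hHsub : H ⊆ (levelSet f R m)ᶜ := by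
    rw [hH, fundHole]; exact connectedComponentIn_subset _ _
  have hWsub : W ⊆ (levelSet f R m)ᶜ := by
    rintro y ⟨z, hzG, rfl⟩
    have hnm := Stmt19.not_mem_levelSet_iter hd hnc hR hM (hGsub hzG) n
    rwa [show L + (n:ℤ) = m by omega] at hnm
  have hw0W : f^[n] z1 ∈ W := ⟨z1, hz1G, rfl⟩
  have hballH : Metric.ball (0:ℂ) ((maxMod f)^[m.toNat] R) ⊆ H := by
    rw [hH, fundHole]
    have hsub : Metric.ball (0:ℂ) ((maxMod f)^[m.toNat] R) ⊆ (levelSet f R m)ᶜ := by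
      intro z hz hzl
      have h1 := Stmt19.abs_ge_of_mem_levelSet (f := f) (R := R) hnL hzl
      rw [mem_ball_zero_iff] at hz
      exact absurd h1 (not_le.mpr hz)
    refine (convex_ball _ _).isPreconnected.subset_connectedComponentIn ?_ hsub
    rw [mem_ball_zero_iff]
    simpa using Stmt19.iterM_pos hR hM m.toNat
  have hw0H : f^[n] z1 ∈ H := by
    apply hballH
    rw [mem_ball_zero_iff]
    exact hdip n hn
  have hWH : W ⊆ H := by
    have h1 : connectedComponentIn (levelSet f R m)ᶜ 0 =
        connectedComponentIn (levelSet f R m)ᶜ (f^[n] z1) := by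
      apply connectedComponentIn_eq
      rw [hH, fundHole] at hw0H
      exact hw0H
    rw [hH, fundHole, h1]
    exact hWconn.subset_connectedComponentIn hw0W hWsub
  have hfrW1 : frontier W ⊆ f^[n] '' (frontier G) :=
    Stmt19.frontier_image_subset (hd.continuous.iterate n) hGbounded hWopen
  have hfrGim : f^[n] '' (frontier G) ⊆ levelSet f R m := by
    rintro y ⟨x, hx, rfl⟩
    have hin := Stmt19.mem_levelSet_iter (f := f) (R := R) (hfrG hx) n
    rwa [show L + (n:ℤ) = m by omega] at hin
  have hfrW : frontier W ⊆ levelSet f R m := subset_trans hfrW1 hfrGim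
  have hHW : H ⊆ W := by
    apply Stmt19.subset_of_preconnected_aux hHconn hWopen
    · apply Set.eq_empty_iff_forall_notMem.mpr
      rintro z ⟨hzH, hzfr⟩
      exact (hHsub hzH) (hfrW hzfr)
    · exact ⟨f^[n] z1, hw0H, hw0W⟩
  have hWeq : W = H := Set.Subset.antisymm hWH hHW
  refine ⟨hWeq, ?_⟩
  have hloop : fundLoop f R m = frontier H := by rw [fundLoop, hH]
  rw [hloop]
  apply Set.Subset.antisymm
  · rintro y ⟨x, hx, rfl⟩
    have hyA : f^[n] x ∈ levelSet f R m := hfrGim ⟨x, hx, rfl⟩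
    have hycl : f^[n] x ∈ closure W := by
      have h1 : f^[n] x ∈ f^[n] '' closure G := ⟨x, hx.1, rfl⟩
      exact (image_closure_subset_closure_image (hd.continuous.iterate n)) h1
    have hynotH : f^[n] x ∉ H := fun h => (hHsub h) hyA
    rw [hWeq] at hycl
    exact ⟨hycl, by rw [hHopen.interior_eq]; exact hynotH⟩
  · rw [← hWeq]
    exact hfrW1
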